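/- arXiv:0802.3799 — 3 statements merged into one kernel-verified Lean document; each statement's English description precedes it below -/
import Mathlib

section
/- Suppose L, R : g → A are linear maps into a Lie Q-algebra A satisfying the generalized Maurer–Cartan equations: [L_x,L_y] = L_{[x,y]} − 2[L_x,R_y], [R_x,R_y] = R_{[y,x]} − 2[R_x,L_y], and [L_x,R_y] = [R_x,L_y] for all x,y. Then [L_x,L_y] = 2Y(x;y) + (1/3)L_{[x,y]} + (2/3)R_{[x,y]}, where 6·Y(x;y) := [L_x,L_y] + [R_x,R_y] + [L_x+R_x, L_y+R_y]. -/
theorem stmt1 {g A : Type*} [LieRing g] [LieAlgebra ℚ g] [LieRing A] [LieAlgebra ℚ A]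
    (L R : g →ₗ[ℚ] A) (Y : g → g → A)
    (hY : ∀ x y, (6 : ℚ) • Y x y =
      ⁅L x, L y⁆ + ⁅R x, R y⁆ + ⁅L x + R x, L y + R y⁆)
    (h1 : ∀ x y, ⁅L x, L y⁆ = L ⁅x, y⁆ - (2 : ℚ) • ⁅L x, R y⁆)
    (h2 : ∀ x y, ⁅R x, R y⁆ = R ⁅y, x⁆ - (2 : ℚ) • ⁅R x, L y⁆)
    (h3 : ∀ x y, ⁅L x, R y⁆ = ⁅R x, L y⁆) :
    ∀ x y, ⁅L x, L y⁆ =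
      (2 : ℚ) • Y x y + (1/3 : ℚ) • L ⁅x, y⁆ + (2/3 : ℚ) • R ⁅x, y⁆ := by
  intro x y
  have hY' := hY x y
  have h1' := h1 x y
  have h2' := h2 x y
  have h3' := h3 x y
  have hr : R ⁅y, x⁆ = - R ⁅x, y⁆ := by rw [← lie_skew, map_neg]
  rw [add_lie, lie_add, lie_add, h3'] at hY'
  have key : (3 : ℚ) • ⁅L x, L y⁆ =
      (3 : ℚ) • ((2 : ℚ) • Y x y + (1/3 : ℚ) • L ⁅x, y⁆ + (2/3 : ℚ) • R ⁅x, y⁆) := by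
    linear_combination (norm := module) -hY' + h1' - (2:ℚ) • h3' - (2:ℚ) • h2' - (2:ℚ) • hr
  exact smul_right_injective A (by norm_num : (3:ℚ) ≠ 0) key
end

section
/- Under the generalized Maurer–Cartan equations [L_x,L_y] = L_{[x,y]} − 2[L_x,R_y], [R_x,R_y] = R_{[y,x]} − 2[R_x,L_y], [L_x,R_y] = [R_x,L_y], one has [L_x,R_y] = −Y(x;y) + (1/3)L_{[x,y]} − (1/3)R_{[x,y]}. -/
theorem stmt2 {g A : Type*} [LieRing g] [LieAlgebra ℚ g] [LieRing A] [LieAlgebra ℚ A]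
    (L R : g →ₗ[ℚ] A) (Y : g → g → A)
    (hY : ∀ x y, (6 : ℚ) • Y x y =
      ⁅L x, L y⁆ + ⁅R x, R y⁆ + ⁅L x + R x, L y + R y⁆)
    (h1 : ∀ x y, ⁅L x, L y⁆ = L ⁅x, y⁆ - (2 : ℚ) • ⁅L x, R y⁆)
    (h2 : ∀ x y, ⁅R x, R y⁆ = R ⁅y, x⁆ - (2 : ℚ) • ⁅R x, L y⁆)
    (h3 : ∀ x y, ⁅L x, R y⁆ = ⁅R x, L y⁆) :
    ∀ x y, ⁅L x, R y⁆ =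
      -Y x y + (1/3 : ℚ) • L ⁅x, y⁆ - (1/3 : ℚ) • R ⁅x, y⁆ := by
  intro x y
  have hR : R ⁅y, x⁆ = - R ⁅x, y⁆ := by rw [← lie_skew, map_neg]
  have hy := hY x y
  simp only [lie_add, add_lie, h1 x y, h2 x y, h3 x y, hR] at hy
  have key : (6 : ℚ) • ⁅L x, R y⁆ =
      (6 : ℚ) • (-Y x y + (1/3 : ℚ) • L ⁅x, y⁆ - (1/3 : ℚ) • R ⁅x, y⁆) := by
    rw [h3 x y]
    linear_combination (norm := module) hy
  exact smul_right_injective A (by norm_num : (6:ℚ) ≠ 0) key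
end

section
/- Under the generalized Maurer–Cartan equations [L_x,L_y] = L_{[x,y]} − 2[L_x,R_y], [R_x,R_y] = R_{[y,x]} − 2[R_x,L_y], [L_x,R_y] = [R_x,L_y], one has [R_x,R_y] = 2Y(x;y) − (2/3)L_{[x,y]} − (1/3)R_{[x,y]}. -/
theorem stmt3 {g A : Type*} [LieRing g] [LieAlgebra ℚ g] [LieRing A] [LieAlgebra ℚ A]
    (L R : g →ₗ[ℚ] A) (Y : g → g → A)
    (hY : ∀ x y, (6 : ℚ) • Y x y =
      ⁅L x, L y⁆ + ⁅R x, R y⁆ + ⁅L x + R x, L y + R y⁆)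
    (h1 : ∀ x y, ⁅L x, L y⁆ = L ⁅x, y⁆ - (2 : ℚ) • ⁅L x, R y⁆)
    (h2 : ∀ x y, ⁅R x, R y⁆ = R ⁅y, x⁆ - (2 : ℚ) • ⁅R x, L y⁆)
    (h3 : ∀ x y, ⁅L x, R y⁆ = ⁅R x, L y⁆) :
    ∀ x y, ⁅R x, R y⁆ =
      (2 : ℚ) • Y x y - (2/3 : ℚ) • L ⁅x, y⁆ - (1/3 : ℚ) • R ⁅x, y⁆ := by
  intro x y
  have hY' := hY x y
  have h1' := h1 x y
  have h2' := h2 x y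
  have h3' := h3 x y
  simp only [lie_add, add_lie] at hY'
  rw [← lie_skew y x, map_neg] at h2'
  rw [h3'] at hY' h1'
  linear_combination (norm := module) (-1/3 : ℚ) • hY' + (-2/3 : ℚ) • h1' + (1/3 : ℚ) • h2'
end
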